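/- Let n ∈ ℕ, N = 2^n, and let G be the n-fold Kronecker power over 𝔽₂ of the kernel [[1,0],[1,1]]. Suppose i, j ∈ {0,…,N−1} with i ≠ j satisfy popcount(i) = popcount(j) = ℓ ≥ 2. Then for every T ⊆ {t ∈ {0,…,N−1} : popcount(t) ≥ ℓ+1}, i₁(g_i + g_j + Σ_{t∈T} g_t) ≥ i₁(g_i + g_j) = 2^{ℓ+1} − 2^{popcount(i AND j)+1}. -/

import Mathlib

open Finset

/-- The polar kernel `G₂ = [[1,0],[1,1]]` over `𝔽₂`. -/
def polarKernel : Matrix (Fin 2) (Fin 2) (ZMod 2) := !![1, 0; 1, 1]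

/-- The `n`-fold Kronecker power of the polar kernel, an `N × N` matrix over `𝔽₂`
with `N = 2 ^ n`, rows and columns indexed by `0, …, N-1`. -/
def polarG : (n : ℕ) → Matrix (Fin (2 ^ n)) (Fin (2 ^ n)) (ZMod 2)
  | 0 => 1
  | n + 1 =>
    Matrix.reindex (finCongr (by ring)) (finCongr (by ring))
      (Matrix.reindex finProdFinEquiv finProdFinEquiv
        (Matrix.kroneckerMap (· * ·) polarKernel (polarG n)))

/-- Row `g_t` of the polar matrix, as a vector in `𝔽₂^N`. -/
def row (n : ℕ) (t : Fin (2 ^ n)) : Fin (2 ^ n) → ZMod 2 := fun c => polarG n t c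

/-- Hamming weight `i₁(v)`: the number of nonzero coordinates of `v`. -/
def hammingWeight {N : ℕ} (v : Fin N → ZMod 2) : ℕ :=
  (Finset.univ.filter fun c => v c ≠ 0).card

/-- `popcount j`: the number of ones in the binary representation of `j`. -/
def popcount (j : ℕ) : ℕ := (Nat.bits j).count true

namespace PolarAux

/-- coefficient-set evaluation: `f φ c` = parity of number of `t ∈ φ` with `c ⊆ t`. -/
def f (φ : Finset (Finset ℕ)) (c : Finset ℕ) : ZMod 2 :=
  ((φ.filter fun t => c ⊆ t).card : ZMod 2)

/-- weight of `f φ` over columns `c ⊆ u`. -/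
def Wt (u : Finset ℕ) (φ : Finset (Finset ℕ)) : ℕ :=
  ((u.powerset).filter fun c => f φ c ≠ 0).card

lemma zmod2_eq_ite (x : ZMod 2) : x = if x ≠ 0 then 1 else 0 := by
  fin_cases x <;> simp <;> rfl

lemma bridge {α : Type*} [DecidableEq α] (A : Finset α) (g : α → ZMod 2) :
    (((A.filter fun a => g a ≠ 0).card : ZMod 2)) = ∑ a ∈ A, g a := by
  classical
  rw [Finset.card_filter]
  push_cast
  exact Finset.sum_congr rfl fun a _ => (zmod2_eq_ite (g a)).symm

lemma f_eq_sum (φ : Finset (Finset ℕ)) (c : Finset ℕ) :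
    f φ c = ∑ t ∈ φ, if c ⊆ t then (1 : ZMod 2) else 0 := by
  rw [f, Finset.card_filter]; push_cast; rfl

lemma two_pow_zmod2 (k : ℕ) : ((2 ^ k : ℕ) : ZMod 2) = if k = 0 then 1 else 0 := by
  cases k with
  | zero => simp
  | succ m =>
    have h2 : ((2:ZMod 2)) = 0 := by decide
    rw [pow_succ]; push_cast; rw [h2]; ring

/-- the filtered powerset counting lemma -/
lemma powerset_filter_subset (I t : Finset ℕ) :
    (I.powerset).filter (fun x => x ⊆ t) = (I ∩ t).powerset := by
  ext x
  rw [Finset.mem_filter, Finset.mem_powerset, Finset.mem_powerset, Finset.subset_inter_iff]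


section Peel

variable (φ : Finset (Finset ℕ)) (k : ℕ)

/-- coefficients of the restriction to columns not containing `k` -/
def phi0 : Finset (Finset ℕ) :=
  symmDiff (φ.filter fun t => k ∉ t) ((φ.filter fun t => k ∈ t).image fun t => t.erase k)

/-- coefficients of the restriction to columns containing `k` -/
def phi1 : Finset (Finset ℕ) :=
  (φ.filter fun t => k ∈ t).image fun t => t.erase k

lemma filter_symmDiff' (p : Finset ℕ → Prop) [DecidablePred p] (A B : Finset (Finset ℕ)) :
    (symmDiff A B).filter p = symmDiff (A.filter p) (B.filter p) := by
  ext t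
  simp only [Finset.mem_filter, Finset.mem_symmDiff]
  tauto

lemma card_symmDiff_zmod2 (A B : Finset (Finset ℕ)) :
    ((symmDiff A B).card : ZMod 2) = (A.card : ZMod 2) + B.card := by
  have h1 : (A \ B).card + (A ∩ B).card = A.card := Finset.card_sdiff_add_card_inter A B
  have h2 : (B \ A).card + (B ∩ A).card = B.card := Finset.card_sdiff_add_card_inter B A
  have hdisj : Disjoint (A \ B) (B \ A) := by
    rw [Finset.disjoint_left]
    intro x hx hx'
    simp only [Finset.mem_sdiff] at hx hx'
    exact hx.2 hx'.1
  have h3 : (symmDiff A B).card = (A \ B).card + (B \ A).card := by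
    rw [symmDiff_def]
    exact Finset.card_union_of_disjoint hdisj
  have h4 : (A ∩ B).card = (B ∩ A).card := by rw [Finset.inter_comm]
  have h5 : A.card + B.card = (symmDiff A B).card + 2 * (A ∩ B).card := by omega
  have h6 := congrArg (fun n : ℕ => (n : ZMod 2)) h5
  push_cast at h6
  have h2zero : (2 : ZMod 2) = 0 := by decide
  rw [h2zero, zero_mul, add_zero] at h6
  exact h6.symm

lemma f_symmDiff (A B : Finset (Finset ℕ)) (c : Finset ℕ) :
    f (symmDiff A B) c = f A c + f B c := by
  unfold f
  rw [filter_symmDiff', card_symmDiff_zmod2]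

lemma f_filter_split (p : Finset ℕ → Prop) [DecidablePred p] (c : Finset ℕ) :
    f φ c = f (φ.filter p) c + f (φ.filter fun t => ¬ p t) c := by
  unfold f
  have : φ = (φ.filter p) ∪ (φ.filter fun t => ¬ p t) :=
    (Finset.filter_union_filter_not_eq (p := p) φ).symm
  rw [show (φ.filter fun t => c ⊆ t) = ((φ.filter p) ∪ (φ.filter fun t => ¬ p t)).filter
      (fun t => c ⊆ t) by rw [← this]]
  rw [Finset.filter_union, Finset.card_union_of_disjoint]
  · push_cast; ring
  · exact Finset.disjoint_filter_filter (Finset.disjoint_filter_filter_not φ φ p)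

lemma erase_injOn' (s : Finset (Finset ℕ)) (hs : ∀ t ∈ s, k ∈ t) :
    Set.InjOn (fun t => Finset.erase t k) ↑s := by
  intro a ha b hb hab
  have hab' : a.erase k = b.erase k := hab
  have h : insert k (a.erase k) = insert k (b.erase k) := by rw [hab']
  rwa [Finset.insert_erase (hs a ha), Finset.insert_erase (hs b hb)] at h

lemma f_image_erase (c : Finset ℕ) (hkc : k ∉ c) :
    f ((φ.filter fun t => k ∈ t).image fun t => t.erase k) c = f (φ.filter fun t => k ∈ t) c := by
  unfold f
  have hset : ((φ.filter fun t => k ∈ t).filter fun t => c ⊆ t.erase k)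
      = ((φ.filter fun t => k ∈ t).filter fun t => c ⊆ t) := by
    apply Finset.filter_congr
    intro t ht
    simp only [Finset.mem_filter] at ht
    constructor
    · intro h x hx
      exact Finset.mem_of_mem_erase (h hx)
    · intro h x hx
      exact Finset.mem_erase.2 ⟨fun hxk => hkc (hxk ▸ hx), h hx⟩
  rw [Finset.filter_image, Finset.card_image_of_injOn, hset]
  exact Set.InjOn.mono (Finset.filter_subset _ _) (erase_injOn' k _ (fun t ht =>
    (Finset.mem_filter.1 ht).2))

lemma f_phi0 (c : Finset ℕ) (hkc : k ∉ c) : f (phi0 φ k) c = f φ c := by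
  unfold phi0
  rw [f_symmDiff, f_image_erase φ k c hkc,
    f_filter_split φ (fun t => k ∈ t) c]
  rw [add_comm]

lemma f_phi1 (c : Finset ℕ) (hkc : k ∉ c) : f (phi1 φ k) c = f φ (insert k c) := by
  unfold phi1 f
  have hset : ((φ.filter fun t => k ∈ t).filter fun t => c ⊆ t.erase k)
      = (φ.filter fun t => insert k c ⊆ t) := by
    ext t
    simp only [Finset.mem_filter]
    constructor
    · rintro ⟨⟨ht, hkt⟩, hsub⟩
      refine ⟨ht, Finset.insert_subset hkt fun x hx => Finset.mem_of_mem_erase (hsub hx)⟩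
    · rintro ⟨ht, hsub⟩
      have hkt : k ∈ t := hsub (Finset.mem_insert_self k c)
      refine ⟨⟨ht, hkt⟩, fun x hx => Finset.mem_erase.2
        ⟨fun hxk => hkc (hxk ▸ hx), hsub (Finset.mem_insert_of_mem hx)⟩⟩
  rw [Finset.filter_image, Finset.card_image_of_injOn, hset]
  exact Set.InjOn.mono (Finset.filter_subset _ _) (erase_injOn' k _ (fun t ht =>
    (Finset.mem_filter.1 ht).2))


lemma phi0_symmDiff_phi1 : symmDiff (phi0 φ k) (phi1 φ k) = φ.filter fun t => k ∉ t := by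
  unfold phi0 phi1
  exact symmDiff_symmDiff_cancel_right _ _

lemma Wt_subadd (u : Finset ℕ) (A B : Finset (Finset ℕ)) :
    Wt u (symmDiff A B) ≤ Wt u A + Wt u B := by
  unfold Wt
  calc ((u.powerset).filter fun c => f (symmDiff A B) c ≠ 0).card
      ≤ (((u.powerset).filter fun c => f A c ≠ 0) ∪
          ((u.powerset).filter fun c => f B c ≠ 0)).card := by
        apply Finset.card_le_card
        intro c hc
        simp only [Finset.mem_filter, Finset.mem_union] at hc ⊢
        rcases hc with ⟨hcu, hne⟩
        rw [f_symmDiff] at hne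
        by_cases hA : f A c = 0
        · exact Or.inr ⟨hcu, by rwa [hA, zero_add] at hne⟩
        · exact Or.inl ⟨hcu, hA⟩
    _ ≤ _ := Finset.card_union_le _ _

lemma Wt_split (u : Finset ℕ) (hk : k ∈ u) :
    Wt u φ = Wt (u.erase k) (phi0 φ k) + Wt (u.erase k) (phi1 φ k) := by
  unfold Wt
  have hknu : k ∉ u.erase k := Finset.notMem_erase k u
  have hpow : u.powerset
      = (u.erase k).powerset ∪ ((u.erase k).powerset).image (insert k) := by
    rw [← Finset.powerset_insert, Finset.insert_erase hk]
  rw [hpow, Finset.filter_union, Finset.card_union_of_disjoint]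
  · congr 1
    · apply congrArg
      apply Finset.filter_congr
      intro c hc
      rw [Finset.mem_powerset] at hc
      rw [f_phi0 φ k c (fun h => hknu (hc h))]
    · rw [Finset.filter_image]
      rw [Finset.card_image_of_injOn]
      · apply congrArg
        apply Finset.filter_congr
        intro c hc
        rw [Finset.mem_powerset] at hc
        rw [f_phi1 φ k c (fun h => hknu (hc h))]
      · intro a ha b hb hab
        simp only [Finset.coe_filter, Set.mem_setOf_eq, Finset.mem_powerset] at ha hb
        have hab' : insert k a = insert k b := hab
        have hka : k ∉ a := fun h => hknu (ha.1 h)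
        have hkb : k ∉ b := fun h => hknu (hb.1 h)
        rw [← Finset.erase_insert hka, ← Finset.erase_insert hkb, hab']
  · rw [Finset.disjoint_left]
    intro c hc hc'
    simp only [Finset.mem_filter, Finset.mem_powerset, Finset.mem_image] at hc hc'
    rcases hc'.1 with ⟨d, hd, rfl⟩
    exact hknu (hc.1 (Finset.mem_insert_self k d))

end Peel

section Sums

lemma card_filter_cast {α : Type*} (A : Finset α) (P : α → Prop) [DecidablePred P] :
    (((A.filter P).card : ZMod 2)) = ∑ a ∈ A, if P a then (1 : ZMod 2) else 0 := by
  rw [Finset.card_filter]; push_cast; rfl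

lemma sum_f (A : Finset (Finset ℕ)) (g : Finset ℕ → Finset ℕ) (φ : Finset (Finset ℕ)) :
    ∑ x ∈ A, f φ (g x) = ∑ t ∈ φ, ((A.filter fun x => g x ⊆ t).card : ZMod 2) := by
  have h : ∀ x ∈ A, f φ (g x) = ∑ t ∈ φ, if g x ⊆ t then (1 : ZMod 2) else 0 :=
    fun x _ => f_eq_sum φ (g x)
  rw [Finset.sum_congr rfl h, Finset.sum_comm]
  exact Finset.sum_congr rfl fun t _ => (card_filter_cast A _).symm

lemma powerset_filter_mem_card (s : Finset ℕ) (i : ℕ) (hi : i ∈ s) :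
    ((s.powerset).filter fun x => i ∈ x).card = 2 ^ (s.card - 1) := by
  rw [← Finset.card_erase_of_mem hi, ← Finset.card_powerset]
  apply Finset.card_nbij' (fun x => x.erase i) (fun x => insert i x)
  · intro x hx
    simp only [Finset.mem_coe, Finset.mem_filter, Finset.mem_powerset] at hx ⊢
    exact fun y hy => Finset.mem_erase.2
      ⟨(Finset.mem_erase.1 hy).1, hx.1 (Finset.mem_of_mem_erase hy)⟩
  · intro x hx
    simp only [Finset.mem_coe, Finset.mem_filter, Finset.mem_powerset] at hx ⊢
    refine ⟨Finset.insert_subset hi fun y hy => Finset.mem_of_mem_erase (hx hy),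
      Finset.mem_insert_self i x⟩
  · intro x hx
    simp only [Finset.mem_coe, Finset.mem_filter, Finset.mem_powerset] at hx
    exact Finset.insert_erase hx.2
  · intro x hx
    simp only [Finset.mem_coe, Finset.mem_powerset] at hx
    exact Finset.erase_insert fun h => (Finset.mem_erase.1 (hx h)).1 rfl

end Sums

section Core

variable {I J : Finset ℕ} {φ : Finset (Finset ℕ)}

lemma I_nonempty (hIJ : I ≠ J) (hcard : I.card = J.card) : 1 ≤ I.card := by
  rcases Nat.eq_zero_or_pos I.card with h | h
  · exfalso
    apply hIJ
    have hJ0 : J.card = 0 := by omega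
    rw [Finset.card_eq_zero.1 h, Finset.card_eq_zero.1 hJ0]
  · exact h

lemma core_row_parity (hdisj : Disjoint I J) (hIJ : I ≠ J) (hcard : I.card = J.card)
    (hJ : J ∈ φ)
    (hspec : ∀ t ∈ φ, t ⊆ I ∪ J ∧ (t = I ∨ t = J ∨ I.card + 1 ≤ t.card))
    (b : Finset ℕ) (hb : b ⊆ J) :
    ∑ x ∈ I.powerset, f φ (x ∪ b) = 1 := by
  have hIne := I_nonempty hIJ hcard
  rw [sum_f]
  have hterm : ∀ t ∈ φ, (((I.powerset).filter fun x => x ∪ b ⊆ t).card : ZMod 2)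
      = if t = J then 1 else 0 := by
    intro t ht
    by_cases hbt : b ⊆ t
    · have hset : (I.powerset).filter (fun x => x ∪ b ⊆ t) = (I ∩ t).powerset := by
        ext x
        simp only [Finset.mem_filter, Finset.mem_powerset, Finset.union_subset_iff,
          Finset.subset_inter_iff]
        tauto
      rw [hset, Finset.card_powerset, two_pow_zmod2]
      rcases (hspec t ht).2 with rfl | rfl | hbig
      · rw [if_neg, if_neg hIJ]
        rw [Finset.inter_self, Finset.card_eq_zero]
        intro h
        rw [h] at hIne
        simp at hIne
      · rw [if_pos, if_pos rfl]
        rw [Finset.card_eq_zero, ← Finset.disjoint_iff_inter_eq_empty]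
        exact hdisj
      · have htJ : t ≠ J := by
          intro h
          rw [h, hcard] at hbig
          omega
        rw [if_neg, if_neg htJ]
        rw [Finset.card_eq_zero, ← Finset.disjoint_iff_inter_eq_empty]
        intro hd
        have htJ' : t ⊆ J := by
          intro x hx
          rcases Finset.mem_union.1 ((hspec t ht).1 hx) with h | h
          · exact absurd hx (Finset.disjoint_left.1 hd h)
          · exact h
        have := Finset.card_le_card htJ'
        rw [← hcard] at this
        omega
    · have hset : (I.powerset).filter (fun x => x ∪ b ⊆ t) = ∅ := by
        rw [Finset.filter_eq_empty_iff]
        intro x _ hsub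
        exact hbt (Finset.union_subset_iff.1 hsub).2
      rw [hset]
      have : t ≠ J := fun h => hbt (h ▸ hb)
      rw [if_neg this]
      simp
  rw [Finset.sum_congr rfl hterm, Finset.sum_ite_eq' φ J (fun _ => (1 : ZMod 2)), if_pos hJ]

lemma inter_insert_eq_singleton (hdisj : Disjoint I J) {i : ℕ} (hi : i ∈ I) :
    I ∩ insert i J = {i} := by
  ext x
  simp only [Finset.mem_inter, Finset.mem_insert, Finset.mem_singleton]
  constructor
  · rintro ⟨hxI, hx | hx⟩
    · exact hx
    · exact absurd hx (Finset.disjoint_left.1 hdisj hxI)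
  · rintro rfl
    exact ⟨hi, Or.inl rfl⟩

lemma core_mu_parity (hdisj : Disjoint I J) (hIJ : I ≠ J) (hcard : I.card = J.card)
    (hspec : ∀ t ∈ φ, t ⊆ I ∪ J ∧ (t = I ∨ t = J ∨ I.card + 1 ≤ t.card))
    (hl : 2 ≤ I.card) {i : ℕ} (hi : i ∈ I) (b : Finset ℕ) (hb : b ⊆ J) :
    ∑ x ∈ (I.powerset).filter (fun x => i ∈ x), f φ (x ∪ b)
      = if insert i J ∈ φ then 1 else 0 := by
  rw [sum_f]
  have hterm : ∀ t ∈ φ,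
      ((((I.powerset).filter (fun x => i ∈ x)).filter fun x => x ∪ b ⊆ t).card : ZMod 2)
      = if t = insert i J then 1 else 0 := by
    intro t ht
    by_cases hc : b ⊆ t ∧ i ∈ t
    · have hiIt : i ∈ I ∩ t := Finset.mem_inter.2 ⟨hi, hc.2⟩
      have hset : ((I.powerset).filter (fun x => i ∈ x)).filter (fun x => x ∪ b ⊆ t)
          = ((I ∩ t).powerset).filter (fun x => i ∈ x) := by
        ext x
        simp only [Finset.mem_filter, Finset.mem_powerset, Finset.union_subset_iff,
          Finset.subset_inter_iff]
        constructor
        · rintro ⟨⟨h1, h2⟩, h3, _⟩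
          exact ⟨⟨h1, h3⟩, h2⟩
        · rintro ⟨⟨h1, h3⟩, h2⟩
          exact ⟨⟨h1, h2⟩, h3, hc.1⟩
      rw [hset, powerset_filter_mem_card _ _ hiIt, two_pow_zmod2]
      have hm : 1 ≤ (I ∩ t).card := Finset.card_pos.2 ⟨i, hiIt⟩
      have key : (I ∩ t).card - 1 = 0 ↔ t = insert i J := by
        constructor
        · intro h
          have hcard1 : (I ∩ t).card = 1 := by omega
          have hsing : I ∩ t = {i} := by
            rcases Finset.card_eq_one.1 hcard1 with ⟨a, ha⟩
            rw [ha] at hiIt ⊢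
            rw [Finset.mem_singleton.1 hiIt]
          rcases (hspec t ht).2 with rfl | rfl | hbig
          · rw [Finset.inter_self] at hsing
            rw [hsing] at hl
            simp at hl
          · exact absurd hc.2 (Finset.disjoint_left.1 hdisj hi)
          · have hsubset : t ⊆ insert i J := by
              intro x hx
              rcases Finset.mem_union.1 ((hspec t ht).1 hx) with h' | h'
              · have : x ∈ I ∩ t := Finset.mem_inter.2 ⟨h', hx⟩
                rw [hsing] at this
                exact Finset.mem_insert.2 (Or.inl (Finset.mem_singleton.1 this))
              · exact Finset.mem_insert_of_mem h'
            have hiJ : i ∉ J := Finset.disjoint_left.1 hdisj hi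
            have hcardins : (insert i J).card = I.card + 1 := by
              rw [Finset.card_insert_of_notMem hiJ, hcard]
            exact Finset.eq_of_subset_of_card_le hsubset (by omega)
        · intro h
          rw [h, inter_insert_eq_singleton hdisj hi, Finset.card_singleton]
      by_cases hf : (I ∩ t).card - 1 = 0
      · rw [if_pos hf, if_pos (key.1 hf)]
      · rw [if_neg hf, if_neg (fun h => hf (key.2 h))]
    · have hset : ((I.powerset).filter (fun x => i ∈ x)).filter (fun x => x ∪ b ⊆ t) = ∅ := by
        rw [Finset.filter_eq_empty_iff]
        intro x hx hsub
        rw [Finset.mem_filter] at hx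
        exact hc ⟨(Finset.union_subset_iff.1 hsub).2, (Finset.union_subset_iff.1 hsub).1 hx.2⟩
      rw [hset]
      have : t ≠ insert i J := by
        rintro rfl
        exact hc ⟨hb.trans (Finset.subset_insert i J), Finset.mem_insert_self i J⟩
      rw [if_neg this]
      simp
  rw [Finset.sum_congr rfl hterm, Finset.sum_ite_eq' φ _ (fun _ => (1 : ZMod 2))]


lemma union_inter_left {x b : Finset ℕ} (hdisj : Disjoint I J) (hx : x ⊆ I) (hb : b ⊆ J) :
    (x ∪ b) ∩ I = x := by
  ext y
  simp only [Finset.mem_inter, Finset.mem_union]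
  constructor
  · rintro ⟨hy | hy, hyI⟩
    · exact hy
    · exact absurd hyI (Finset.disjoint_right.1 hdisj (hb hy))
  · intro hy
    exact ⟨Or.inl hy, hx hy⟩

lemma union_inter_right {x b : Finset ℕ} (hdisj : Disjoint I J) (hx : x ⊆ I) (hb : b ⊆ J) :
    (x ∪ b) ∩ J = b := by
  ext y
  simp only [Finset.mem_inter, Finset.mem_union]
  constructor
  · rintro ⟨hy | hy, hyJ⟩
    · exact absurd hyJ (Finset.disjoint_left.1 hdisj (hx hy))
    · exact hy
  · intro hy
    exact ⟨Or.inr hy, hb hy⟩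

lemma Wt_rows (hdisj : Disjoint I J) (φ : Finset (Finset ℕ)) :
    Wt (I ∪ J) φ = ∑ b ∈ J.powerset, ((I.powerset).filter fun x => f φ (x ∪ b) ≠ 0).card := by
  unfold Wt
  have heq : ((I ∪ J).powerset).filter (fun c => f φ c ≠ 0)
      = (J.powerset).biUnion (fun b =>
          (((I.powerset).filter fun x => f φ (x ∪ b) ≠ 0).image (fun x => x ∪ b))) := by
    ext c
    simp only [Finset.mem_filter, Finset.mem_powerset, Finset.mem_biUnion, Finset.mem_image]
    constructor
    · rintro ⟨hcu, hf⟩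
      have hcdecomp : (c ∩ I) ∪ (c ∩ J) = c := by
        rw [← Finset.inter_union_distrib_left]
        exact Finset.inter_eq_left.2 hcu
      refine ⟨c ∩ J, Finset.inter_subset_right, c ∩ I,
        ⟨Finset.inter_subset_right, ?_⟩, hcdecomp⟩
      rw [hcdecomp]
      exact hf
    · rintro ⟨b, hb, x, hx, rfl⟩
      exact ⟨Finset.union_subset (hx.1.trans Finset.subset_union_left)
        (hb.trans Finset.subset_union_right), hx.2⟩
  rw [heq, Finset.card_biUnion]
  · apply Finset.sum_congr rfl
    intro b hb
    rw [Finset.mem_powerset] at hb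
    apply Finset.card_image_of_injOn
    intro a ha a' ha' h
    simp only [Finset.mem_coe, Finset.mem_filter, Finset.mem_powerset] at ha ha'
    have h2 : a ∪ b = a' ∪ b := h
    have h' : (a ∪ b) ∩ I = (a' ∪ b) ∩ I := by rw [h2]
    rwa [union_inter_left hdisj ha.1 hb, union_inter_left hdisj ha'.1 hb] at h'
  · intro b1 h1 b2 h2 hne
    rw [Finset.mem_coe, Finset.mem_powerset] at h1 h2
    simp only [Function.onFun]
    rw [Finset.disjoint_left]
    rintro c hc hc'
    simp only [Finset.mem_image, Finset.mem_filter, Finset.mem_powerset] at hc hc'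
    rcases hc with ⟨x, ⟨hx, _⟩, rfl⟩
    rcases hc' with ⟨x', ⟨hx', _⟩, heq'⟩
    apply hne
    have e1 : (x ∪ b1) ∩ J = b1 := union_inter_right hdisj hx h1
    have e2 : (x' ∪ b2) ∩ J = b2 := union_inter_right hdisj hx' h2
    rw [← e1, ← heq', e2]

lemma zmod2_cast_eq_one {n : ℕ} (h : (n : ZMod 2) = 1) : n % 2 = 1 := by
  rcases Nat.even_or_odd n with he | ho
  · exfalso
    rcases he with ⟨m, hm⟩
    rw [hm] at h
    push_cast at h
    have h2 : (2 : ZMod 2) = 0 := by decide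
    rw [show (m : ZMod 2) + m = 2 * m by ring, h2, zero_mul] at h
    exact absurd h.symm (by decide)
  · exact Nat.odd_iff.1 ho

lemma zmod2_ne_zero {x : ZMod 2} (h : x ≠ 0) : x = 1 := by
  fin_cases x
  · exact absurd rfl h
  · rfl

theorem core_bound (hdisj : Disjoint I J) (hIJ : I ≠ J) (hcard : I.card = J.card)
    (hI : I ∈ φ) (hJ : J ∈ φ)
    (hspec : ∀ t ∈ φ, t ⊆ I ∪ J ∧ (t = I ∨ t = J ∨ I.card + 1 ≤ t.card))
    (hl : 2 ≤ I.card) :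
    2 ^ (I.card + 1) - 2 ≤ Wt (I ∪ J) φ := by
  classical
  -- swapped spec
  have hspec' : ∀ t ∈ φ, t ⊆ J ∪ I ∧ (t = J ∨ t = I ∨ J.card + 1 ≤ t.card) := by
    intro t ht
    obtain ⟨h1, h2⟩ := hspec t ht
    refine ⟨by rwa [Finset.union_comm], ?_⟩
    rcases h2 with h | h | h
    · exact Or.inr (Or.inl h)
    · exact Or.inl h
    · exact Or.inr (Or.inr (by omega))
  set ℓ := I.card with hℓdef
  have hℓJ : J.card = ℓ := hcard.symm
  set r : Finset ℕ → ℕ := fun b => ((I.powerset).filter fun x => f φ (x ∪ b) ≠ 0).card with hrdef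
  set col : Finset ℕ → ℕ :=
    fun x => ((J.powerset).filter fun b => f φ (b ∪ x) ≠ 0).card with hcoldef
  have hrowsum : Wt (I ∪ J) φ = ∑ b ∈ J.powerset, r b := Wt_rows hdisj φ
  have hcolsum : Wt (I ∪ J) φ = ∑ x ∈ I.powerset, col x := by
    rw [Finset.union_comm]
    exact Wt_rows hdisj.symm φ
  have hrodd : ∀ b ∈ J.powerset, r b % 2 = 1 := by
    intro b hb
    rw [Finset.mem_powerset] at hb
    apply zmod2_cast_eq_one
    rw [hrdef]
    rw [bridge (I.powerset) (fun x => f φ (x ∪ b))]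
    exact core_row_parity hdisj hIJ hcard hJ hspec b hb
  have hcodd : ∀ x ∈ I.powerset, col x % 2 = 1 := by
    intro x hx
    rw [Finset.mem_powerset] at hx
    apply zmod2_cast_eq_one
    rw [hcoldef]
    rw [bridge (J.powerset) (fun b => f φ (b ∪ x))]
    exact core_row_parity hdisj.symm hIJ.symm hcard.symm hI hspec' x hx
  set xstar : Finset ℕ := I.filter (fun i => insert i J ∈ φ) with hxstardef
  set ystar : Finset ℕ := J.filter (fun j => insert j I ∈ φ) with hystardef
  have hxstarI : xstar ⊆ I := Finset.filter_subset _ _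
  have hystarJ : ystar ⊆ J := Finset.filter_subset _ _
  -- singleton rows have their unique one in column xstar
  have hsing : ∀ b ∈ J.powerset, r b = 1 → f φ (xstar ∪ b) ≠ 0 := by
    intro b hbp hr1
    rw [Finset.mem_powerset] at hbp
    rw [hrdef] at hr1
    obtain ⟨x0, hx0⟩ := Finset.card_eq_one.1 hr1
    have hx0mem : x0 ∈ (I.powerset).filter fun x => f φ (x ∪ b) ≠ 0 := by
      rw [hx0]; exact Finset.mem_singleton_self x0
    rw [Finset.mem_filter, Finset.mem_powerset] at hx0mem
    have hx0I : x0 ⊆ I := hx0mem.1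
    have hx0f : f φ (x0 ∪ b) = 1 := zmod2_ne_zero hx0mem.2
    have hxeq : x0 = xstar := by
      ext i
      constructor
      · intro hix0
        have hiI : i ∈ I := hx0I hix0
        have hmu := core_mu_parity hdisj hIJ hcard hspec hl hiI b hbp
        have hsum : ∑ x ∈ (I.powerset).filter (fun x => i ∈ x), f φ (x ∪ b) = 1 := by
          rw [Finset.sum_filter]
          rw [Finset.sum_eq_single x0]
          · rw [if_pos hix0, hx0f]
          · intro x hx hxne
            by_cases hix : i ∈ x
            · rw [if_pos hix]
              by_contra hne0
              have : x ∈ (I.powerset).filter fun x => f φ (x ∪ b) ≠ 0 :=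
                Finset.mem_filter.2 ⟨hx, fun hz => hne0 (by rw [hz])⟩
              rw [hx0] at this
              exact hxne (Finset.mem_singleton.1 this)
            · rw [if_neg hix]
          · intro hx0np
            exact absurd (Finset.mem_powerset.2 hx0I) hx0np
        rw [hsum] at hmu
        by_contra hins
        rw [hxstardef, Finset.mem_filter] at hins
        rw [if_neg (fun hmem => hins ⟨hiI, hmem⟩)] at hmu
        exact absurd hmu.symm (by decide)
      · intro hixstar
        rw [hxstardef, Finset.mem_filter] at hixstar
        obtain ⟨hiI, hins⟩ := hixstar
        have hmu := core_mu_parity hdisj hIJ hcard hspec hl hiI b hbp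
        rw [if_pos hins] at hmu
        by_contra hix0
        have hsum : ∑ x ∈ (I.powerset).filter (fun x => i ∈ x), f φ (x ∪ b) = 0 := by
          rw [Finset.sum_filter]
          apply Finset.sum_eq_zero
          intro x hx
          by_cases hix : i ∈ x
          · rw [if_pos hix]
            by_cases hxx0 : x = x0
            · rw [hxx0] at hix
              exact absurd hix hix0
            · by_contra hne0
              have : x ∈ (I.powerset).filter fun x => f φ (x ∪ b) ≠ 0 :=
                Finset.mem_filter.2 ⟨hx, fun hz => hne0 (by rw [hz])⟩
              rw [hx0] at this
              exact hxx0 (Finset.mem_singleton.1 this)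
          · rw [if_neg hix]
        rw [hsum] at hmu
        exact absurd hmu (by decide)
    rw [← hxeq]
    exact hx0mem.2
  have hsing' : ∀ x ∈ I.powerset, col x = 1 → f φ (ystar ∪ x) ≠ 0 := by
    intro x hxp hc1
    rw [Finset.mem_powerset] at hxp
    rw [hcoldef] at hc1
    obtain ⟨b0, hb0⟩ := Finset.card_eq_one.1 hc1
    have hb0mem : b0 ∈ (J.powerset).filter fun b => f φ (b ∪ x) ≠ 0 := by
      rw [hb0]; exact Finset.mem_singleton_self b0
    rw [Finset.mem_filter, Finset.mem_powerset] at hb0mem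
    have hb0J : b0 ⊆ J := hb0mem.1
    have hb0f : f φ (b0 ∪ x) = 1 := zmod2_ne_zero hb0mem.2
    have hxeq : b0 = ystar := by
      ext j
      constructor
      · intro hjb0
        have hjJ : j ∈ J := hb0J hjb0
        have hmu := core_mu_parity hdisj.symm hIJ.symm hcard.symm hspec'
          (by omega) hjJ x hxp
        have hsum : ∑ b ∈ (J.powerset).filter (fun b => j ∈ b), f φ (b ∪ x) = 1 := by
          rw [Finset.sum_filter]
          rw [Finset.sum_eq_single b0]
          · rw [if_pos hjb0, hb0f]
          · intro b hb hbne
            by_cases hjb : j ∈ b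
            · rw [if_pos hjb]
              by_contra hne0
              have : b ∈ (J.powerset).filter fun b => f φ (b ∪ x) ≠ 0 :=
                Finset.mem_filter.2 ⟨hb, fun hz => hne0 (by rw [hz])⟩
              rw [hb0] at this
              exact hbne (Finset.mem_singleton.1 this)
            · rw [if_neg hjb]
          · intro hb0np
            exact absurd (Finset.mem_powerset.2 hb0J) hb0np
        rw [hsum] at hmu
        by_contra hins
        rw [hystardef, Finset.mem_filter] at hins
        rw [if_neg (fun hmem => hins ⟨hjJ, hmem⟩)] at hmu
        exact absurd hmu.symm (by decide)
      · intro hjystar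
        rw [hystardef, Finset.mem_filter] at hjystar
        obtain ⟨hjJ, hins⟩ := hjystar
        have hmu := core_mu_parity hdisj.symm hIJ.symm hcard.symm hspec'
          (by omega) hjJ x hxp
        rw [if_pos hins] at hmu
        by_contra hjb0
        have hsum : ∑ b ∈ (J.powerset).filter (fun b => j ∈ b), f φ (b ∪ x) = 0 := by
          rw [Finset.sum_filter]
          apply Finset.sum_eq_zero
          intro b hb
          by_cases hjb : j ∈ b
          · rw [if_pos hjb]
            by_cases hbb0 : b = b0
            · rw [hbb0] at hjb
              exact absurd hjb hjb0
            · by_contra hne0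
              have : b ∈ (J.powerset).filter fun b => f φ (b ∪ x) ≠ 0 :=
                Finset.mem_filter.2 ⟨hb, fun hz => hne0 (by rw [hz])⟩
              rw [hb0] at this
              exact hbb0 (Finset.mem_singleton.1 this)
          · rw [if_neg hjb]
        rw [hsum] at hmu
        exact absurd hmu (by decide)
    rw [← hxeq]
    exact hb0mem.2
  -- counting
  by_contra hcon
  push_neg at hcon
  have hPow : 4 ≤ 2 ^ ℓ := by
    calc (4:ℕ) = 2 ^ 2 := by norm_num
    _ ≤ 2 ^ ℓ := Nat.pow_le_pow_right (by norm_num) hl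
  have hpow1 : 2 ^ (ℓ + 1) = 2 * 2 ^ ℓ := by ring
  have hcardJp : J.powerset.card = 2 ^ ℓ := by rw [Finset.card_powerset, hℓJ]
  have hcardIp : I.powerset.card = 2 ^ ℓ := by rw [Finset.card_powerset]
  set Sr := (J.powerset).filter (fun b => r b = 1) with hSrdef
  set Sc := (I.powerset).filter (fun x => col x = 1) with hScdef
  set s1 := Sr.card with hs1def
  set s2 := Sc.card with hs2def
  have hs1_le : s1 ≤ 2 ^ ℓ := hcardJp ▸ Finset.card_filter_le _ _
  have hs2_le : s2 ≤ 2 ^ ℓ := hcardIp ▸ Finset.card_filter_le _ _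
  have generic_row_bound : ∀ (S : Finset (Finset ℕ)) (g : Finset ℕ → ℕ),
      (∀ b ∈ S, g b % 2 = 1) →
      (S.filter (fun b => g b = 1)).card + 3 * (S.card - (S.filter (fun b => g b = 1)).card)
        ≤ ∑ b ∈ S, g b := by
    intro S g hodd
    have hsplit := Finset.sum_filter_add_sum_filter_not S (fun b => g b = 1) g
    have h1 : ∑ b ∈ S.filter (fun b => g b = 1), g b = (S.filter (fun b => g b = 1)).card := by
      rw [Finset.sum_congr rfl (fun b hb => (Finset.mem_filter.1 hb).2), Finset.sum_const,
        smul_eq_mul, mul_one]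
    have hcards : (S.filter (fun b => ¬ g b = 1)).card
        = S.card - (S.filter (fun b => g b = 1)).card := by
      have := Finset.card_filter_add_card_filter_not
        (s := S) (p := fun b => g b = 1)
      omega
    have h2 : 3 * (S.card - (S.filter (fun b => g b = 1)).card)
        ≤ ∑ b ∈ S.filter (fun b => ¬ g b = 1), g b := by
      calc 3 * (S.card - (S.filter (fun b => g b = 1)).card)
          = ∑ _b ∈ S.filter (fun b => ¬ g b = 1), 3 := by
            rw [Finset.sum_const, hcards, smul_eq_mul, mul_comm]
      _ ≤ _ := Finset.sum_le_sum (fun b hb => by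
            rw [Finset.mem_filter] at hb
            have := hodd b hb.1
            omega)
    omega
  have hineq1 : s1 + 3 * (2 ^ ℓ - s1) ≤ Wt (I ∪ J) φ := by
    rw [hrowsum]
    have := generic_row_bound (J.powerset) r hrodd
    rw [hcardJp] at this
    exact this
  have hineq2 : s2 + 3 * (2 ^ ℓ - s2) ≤ Wt (I ∪ J) φ := by
    rw [hcolsum]
    have := generic_row_bound (I.powerset) col hcodd
    rw [hcardIp] at this
    exact this
  have hs1_ge : 2 ≤ s1 := by omega
  have hs2_ge : 2 ≤ s2 := by omega
  have hxstarP : xstar ∈ I.powerset := Finset.mem_powerset.2 hxstarI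
  have hystarP : ystar ∈ J.powerset := Finset.mem_powerset.2 hystarJ
  have hcolxstar : s1 ≤ col xstar := by
    have hsub : Sr ⊆ (J.powerset).filter (fun b => f φ (b ∪ xstar) ≠ 0) := by
      intro b hb
      rw [hSrdef, Finset.mem_filter] at hb
      refine Finset.mem_filter.2 ⟨hb.1, ?_⟩
      have := hsing b hb.1 hb.2
      rwa [Finset.union_comm] at this
    exact Finset.card_le_card hsub
  have hrystar : s2 ≤ r ystar := by
    have hsub : Sc ⊆ (I.powerset).filter (fun x => f φ (x ∪ ystar) ≠ 0) := by
      intro x hx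
      rw [hScdef, Finset.mem_filter] at hx
      refine Finset.mem_filter.2 ⟨hx.1, ?_⟩
      have := hsing' x hx.1 hx.2
      rwa [Finset.union_comm] at this
    exact Finset.card_le_card hsub
  have hxSc : xstar ∉ Sc := by
    intro hmem
    rw [hScdef, Finset.mem_filter] at hmem
    omega
  have hySr : ystar ∉ Sr := by
    intro hmem
    rw [hSrdef, Finset.mem_filter] at hmem
    omega
  -- row-based refined bound
  have hineqB : s2 + (s1 + 3 * (2 ^ ℓ - 1 - s1)) ≤ Wt (I ∪ J) φ := by
    rw [hrowsum, ← Finset.add_sum_erase _ r hystarP]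
    have hE : ((J.powerset).erase ystar).card = 2 ^ ℓ - 1 := by
      rw [Finset.card_erase_of_mem hystarP, hcardJp]
    have hfilterE : ((J.powerset).erase ystar).filter (fun b => r b = 1) = Sr := by
      rw [Finset.filter_erase, hSrdef.symm, Finset.erase_eq_of_notMem hySr]
    have hbound := generic_row_bound ((J.powerset).erase ystar) r
      (fun b hb => hrodd b (Finset.mem_of_mem_erase hb))
    rw [hfilterE, hE] at hbound
    omega
  have hineqA : s1 + (s2 + 3 * (2 ^ ℓ - 1 - s2)) ≤ Wt (I ∪ J) φ := by
    rw [hcolsum, ← Finset.add_sum_erase _ col hxstarP]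
    have hE : ((I.powerset).erase xstar).card = 2 ^ ℓ - 1 := by
      rw [Finset.card_erase_of_mem hxstarP, hcardIp]
    have hfilterE : ((I.powerset).erase xstar).filter (fun x => col x = 1) = Sc := by
      rw [Finset.filter_erase, hScdef.symm, Finset.erase_eq_of_notMem hxSc]
    have hbound := generic_row_bound ((I.powerset).erase xstar) col
      (fun x hx => hcodd x (Finset.mem_of_mem_erase hx))
    rw [hfilterE, hE] at hbound
    omega
  -- the s1 + s2 ≤ W bound
  have hineqC : s1 + s2 ≤ Wt (I ∪ J) φ := by
    set E1 := Sr.image (fun b => xstar ∪ b) with hE1def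
    set E2 := Sc.image (fun x => ystar ∪ x) with hE2def
    have hcardE1 : E1.card = s1 := by
      apply Finset.card_image_of_injOn
      intro a ha a' ha' h
      simp only [Finset.mem_coe, hSrdef, Finset.mem_filter, Finset.mem_powerset] at ha ha'
      have h2 : xstar ∪ a = xstar ∪ a' := h
      have h' : (xstar ∪ a) ∩ J = (xstar ∪ a') ∩ J := by rw [h2]
      rwa [union_inter_right hdisj hxstarI ha.1,
        union_inter_right hdisj hxstarI ha'.1] at h'
    have hcardE2 : E2.card = s2 := by
      apply Finset.card_image_of_injOn
      intro a ha a' ha' h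
      simp only [Finset.mem_coe, hScdef, Finset.mem_filter, Finset.mem_powerset] at ha ha'
      have h2 : ystar ∪ a = ystar ∪ a' := h
      have h' : (a ∪ ystar) ∩ I = (a' ∪ ystar) ∩ I := by
        rw [Finset.union_comm a ystar, Finset.union_comm a' ystar, h2]
      rwa [union_inter_left hdisj ha.1 hystarJ,
        union_inter_left hdisj ha'.1 hystarJ] at h'
    have hdisjE : Disjoint E1 E2 := by
      rw [Finset.disjoint_left]
      rintro c hc1 hc2
      simp only [hE1def, hE2def, Finset.mem_image] at hc1 hc2
      rcases hc1 with ⟨b, hb, rfl⟩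
      rcases hc2 with ⟨x, hx, heq2⟩
      have hbJ : b ⊆ J := by
        rw [hSrdef, Finset.mem_filter, Finset.mem_powerset] at hb
        exact hb.1
      have hxI : x ⊆ I := by
        rw [hScdef, Finset.mem_filter, Finset.mem_powerset] at hx
        exact hx.1
      have hxeq : x = xstar := by
        have e1 : (xstar ∪ b) ∩ I = xstar := union_inter_left hdisj hxstarI hbJ
        have e2 : (ystar ∪ x) ∩ I = x := by
          rw [Finset.union_comm]
          exact union_inter_left hdisj hxI hystarJ
        rw [← e2, heq2, e1]
      rw [hxeq] at hx
      exact hxSc hx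
    have hsubO : E1 ∪ E2 ⊆ ((I ∪ J).powerset).filter (fun c => f φ c ≠ 0) := by
      intro c hc
      rcases Finset.mem_union.1 hc with hc | hc
      · simp only [hE1def, Finset.mem_image] at hc
        rcases hc with ⟨b, hb, rfl⟩
        have hbmem := hb
        rw [hSrdef, Finset.mem_filter, Finset.mem_powerset] at hbmem
        refine Finset.mem_filter.2 ⟨Finset.mem_powerset.2 (Finset.union_subset
          (hxstarI.trans Finset.subset_union_left)
          (hbmem.1.trans Finset.subset_union_right)), ?_⟩
        exact hsing b (Finset.mem_powerset.2 hbmem.1) hbmem.2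
      · simp only [hE2def, Finset.mem_image] at hc
        rcases hc with ⟨x, hx, rfl⟩
        have hxmem := hx
        rw [hScdef, Finset.mem_filter, Finset.mem_powerset] at hxmem
        refine Finset.mem_filter.2 ⟨Finset.mem_powerset.2 (Finset.union_subset
          (hystarJ.trans Finset.subset_union_right)
          (hxmem.1.trans Finset.subset_union_left)), ?_⟩
        exact hsing' x (Finset.mem_powerset.2 hxmem.1) hxmem.2
    calc s1 + s2 = E1.card + E2.card := by rw [hcardE1, hcardE2]
    _ = (E1 ∪ E2).card := (Finset.card_union_of_disjoint hdisjE).symm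
    _ ≤ ((I ∪ J).powerset.filter (fun c => f φ c ≠ 0)).card := Finset.card_le_card hsubO
    _ = Wt (I ∪ J) φ := rfl
  omega


theorem core_bound_small (hdisj : Disjoint I J) (hIJ : I ≠ J) (hcard : I.card = J.card)
    (hJ : J ∈ φ)
    (hspec : ∀ t ∈ φ, t ⊆ I ∪ J ∧ (t = I ∨ t = J ∨ I.card + 1 ≤ t.card)) :
    2 ^ J.card ≤ Wt (I ∪ J) φ := by
  rw [Wt_rows hdisj φ]
  have hodd : ∀ b ∈ J.powerset, 1 ≤ ((I.powerset).filter fun x => f φ (x ∪ b) ≠ 0).card := by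
    intro b hb
    rw [Finset.mem_powerset] at hb
    have h1 : (((I.powerset).filter fun x => f φ (x ∪ b) ≠ 0).card : ZMod 2) = 1 := by
      rw [bridge (I.powerset) (fun x => f φ (x ∪ b))]
      exact core_row_parity hdisj hIJ hcard hJ hspec b hb
    have := zmod2_cast_eq_one h1
    omega
  calc 2 ^ J.card = ∑ _b ∈ J.powerset, 1 := by
        rw [Finset.sum_const, smul_eq_mul, mul_one, Finset.card_powerset]
  _ ≤ _ := Finset.sum_le_sum hodd

end Core

theorem abstract_main : ∀ (u : Finset ℕ), ∀ (I J : Finset ℕ) (φ : Finset (Finset ℕ)),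
    I ⊆ u → J ⊆ u → I ≠ J → I.card = J.card → I ∈ φ → J ∈ φ →
    (∀ t ∈ φ, t ⊆ u ∧ (t = I ∨ t = J ∨ I.card + 1 ≤ t.card)) →
    2 ^ (I.card + 1) - 2 ^ ((I ∩ J).card + 1) ≤ Wt u φ := by
  intro u
  induction u using Finset.strongInduction with
  | _ u IH =>
    intro I J φ hIu hJu hIJ hcard hI hJ hspec
    have hℓ1 : 1 ≤ I.card := I_nonempty hIJ hcard
    by_cases hinter : (I ∩ J).Nonempty
    · -- Case 1: peel k ∈ I ∩ J
      obtain ⟨k, hk⟩ := hinter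
      have hkI : k ∈ I := (Finset.mem_inter.1 hk).1
      have hkJ : k ∈ J := (Finset.mem_inter.1 hk).2
      have hku : k ∈ u := hIu hkI
      have hssub : u.erase k ⊂ u := Finset.erase_ssubset hku
      set I' := I.erase k with hI'def
      set J' := J.erase k with hJ'def
      have hcardI' : I'.card + 1 = I.card := by
        rw [hI'def, Finset.card_erase_of_mem hkI]; omega
      have hcardJ' : J'.card + 1 = J.card := by
        rw [hJ'def, Finset.card_erase_of_mem hkJ]; omega
      have hI'J' : I' ≠ J' := by
        intro h
        apply hIJ
        rw [← Finset.insert_erase hkI, ← Finset.insert_erase hkJ, ← hI'def, ← hJ'def, h]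
      have hcard' : I'.card = J'.card := by omega
      have hinter' : I' ∩ J' = (I ∩ J).erase k := by
        ext x
        simp only [hI'def, hJ'def, Finset.mem_inter, Finset.mem_erase]
        tauto
      have hcardinter : (I' ∩ J').card + 1 = (I ∩ J).card := by
        rw [hinter', Finset.card_erase_of_mem hk]
        have : 1 ≤ (I ∩ J).card := Finset.card_pos.2 ⟨k, hk⟩
        omega
      have hI'sub : I' ⊆ u.erase k := by
        rw [hI'def]
        exact Finset.erase_subset_erase k hIu
      have hJ'sub : J' ⊆ u.erase k := Finset.erase_subset_erase k hJu
      have hnotmem : ∀ w : Finset ℕ, w.card + 1 = I.card → w ∉ φ := by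
        intro w hw hwφ
        rcases (hspec w hwφ).2 with rfl | rfl | hbig
        · omega
        · omega
        · omega
      -- memberships in phi0 and phi1
      have hI'phi1 : I' ∈ phi1 φ k :=
        Finset.mem_image.2 ⟨I, Finset.mem_filter.2 ⟨hI, hkI⟩, rfl⟩
      have hJ'phi1 : J' ∈ phi1 φ k :=
        Finset.mem_image.2 ⟨J, Finset.mem_filter.2 ⟨hJ, hkJ⟩, rfl⟩
      have hI'phi0 : I' ∈ phi0 φ k := by
        rw [phi0, Finset.mem_symmDiff]
        right
        refine ⟨hI'phi1, fun hmem => ?_⟩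
        exact hnotmem I' hcardI' (Finset.mem_of_mem_filter I' hmem)
      have hJ'phi0 : J' ∈ phi0 φ k := by
        rw [phi0, Finset.mem_symmDiff]
        right
        refine ⟨hJ'phi1, fun hmem => ?_⟩
        exact hnotmem J' (by omega) (Finset.mem_of_mem_filter J' hmem)
      -- specs
      have hspecY : ∀ t ∈ phi1 φ k, t ⊆ u.erase k ∧ (t = I' ∨ t = J' ∨ I'.card + 1 ≤ t.card) := by
        intro t ht
        rcases Finset.mem_image.1 ht with ⟨t0, ht0, rfl⟩
        rw [Finset.mem_filter] at ht0
        obtain ⟨ht0φ, hkt0⟩ := ht0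
        obtain ⟨ht0u, hopt⟩ := hspec t0 ht0φ
        refine ⟨Finset.erase_subset_erase k ht0u, ?_⟩
        rcases hopt with rfl | rfl | hbig
        · exact Or.inl rfl
        · exact Or.inr (Or.inl rfl)
        · refine Or.inr (Or.inr ?_)
          rw [Finset.card_erase_of_mem hkt0]
          omega
      have hspec0 : ∀ t ∈ phi0 φ k, t ⊆ u.erase k ∧ (t = I' ∨ t = J' ∨ I'.card + 1 ≤ t.card) := by
        intro t ht
        rw [phi0, Finset.mem_symmDiff] at ht
        rcases ht with ⟨ht, _⟩ | ⟨ht, _⟩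
        · rw [Finset.mem_filter] at ht
          obtain ⟨htφ, hkt⟩ := ht
          obtain ⟨htu, hopt⟩ := hspec t htφ
          refine ⟨Finset.subset_erase.2 ⟨htu, hkt⟩, ?_⟩
          rcases hopt with rfl | rfl | hbig
          · exact absurd hkI hkt
          · exact absurd hkJ hkt
          · exact Or.inr (Or.inr (by omega))
        · exact hspecY t ht
      have hW0 := IH (u.erase k) hssub I' J' (phi0 φ k) hI'sub hJ'sub hI'J' hcard'
        hI'phi0 hJ'phi0 hspec0
      have hW1 := IH (u.erase k) hssub I' J' (phi1 φ k) hI'sub hJ'sub hI'J' hcard'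
        hI'phi1 hJ'phi1 hspecY
      rw [Wt_split φ k u hku]
      have e1 : 2 ^ (I'.card + 1) = 2 ^ I.card := by rw [hcardI']
      have e2 : 2 ^ ((I' ∩ J').card + 1) = 2 ^ (I ∩ J).card := by rw [hcardinter]
      rw [e1, e2] at hW0 hW1
      have e3 : 2 ^ (I.card + 1) = 2 * 2 ^ I.card := by ring
      have e4 : 2 ^ ((I ∩ J).card + 1) = 2 * 2 ^ (I ∩ J).card := by ring
      have e5 : 2 ^ (I ∩ J).card ≤ 2 ^ I.card :=
        Nat.pow_le_pow_right (by norm_num) (Finset.card_le_card Finset.inter_subset_left)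
      omega
    · -- I ∩ J = ∅
      rw [Finset.not_nonempty_iff_eq_empty] at hinter
      have hdisj : Disjoint I J := Finset.disjoint_iff_inter_eq_empty.2 hinter
      have hc0 : (I ∩ J).card = 0 := by rw [hinter]; rfl
      by_cases hext : ∃ k ∈ u, k ∉ I ∪ J
      · -- Case 2: peel k outside I ∪ J
        obtain ⟨k, hku, hknIJ⟩ := hext
        have hkI : k ∉ I := fun h => hknIJ (Finset.mem_union_left J h)
        have hkJ : k ∉ J := fun h => hknIJ (Finset.mem_union_right I h)
        have hssub : u.erase k ⊂ u := Finset.erase_ssubset hku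
        set ψ := φ.filter (fun t => k ∉ t) with hψdef
        have hIψ : I ∈ ψ := Finset.mem_filter.2 ⟨hI, hkI⟩
        have hJψ : J ∈ ψ := Finset.mem_filter.2 ⟨hJ, hkJ⟩
        have hspecψ : ∀ t ∈ ψ, t ⊆ u.erase k ∧ (t = I ∨ t = J ∨ I.card + 1 ≤ t.card) := by
          intro t ht
          rw [hψdef, Finset.mem_filter] at ht
          exact ⟨Finset.subset_erase.2 ⟨(hspec t ht.1).1, ht.2⟩, (hspec t ht.1).2⟩
        have hWψ := IH (u.erase k) hssub I J ψ
          (Finset.subset_erase.2 ⟨hIu, hkI⟩) (Finset.subset_erase.2 ⟨hJu, hkJ⟩)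
          hIJ hcard hIψ hJψ hspecψ
        have hsub := Wt_subadd (u.erase k) (phi0 φ k) (phi1 φ k)
        rw [phi0_symmDiff_phi1 φ k, ← hψdef] at hsub
        rw [Wt_split φ k u hku]
        omega
      · -- Case 3: u = I ∪ J
        push_neg at hext
        have huIJ : u = I ∪ J :=
          Finset.Subset.antisymm (fun x hx => hext x hx) (Finset.union_subset hIu hJu)
        subst huIJ
        rw [hc0, pow_one]
        by_cases hl : 2 ≤ I.card
        · exact core_bound hdisj hIJ hcard hI hJ hspec hl
        · have hℓeq : I.card = 1 := by omega
          have := core_bound_small hdisj hIJ hcard hJ hspec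
          rw [← hcard, hℓeq] at this
          have e : 2 ^ (I.card + 1) = 4 := by rw [hℓeq]; norm_num
          omega

section Transfer

/-- bit-set of a natural number, restricted to bits `< n` -/
def Bset (n j : ℕ) : Finset ℕ := (Finset.range n).filter (fun k => j.testBit k)

lemma Bset_subset_range (n j : ℕ) : Bset n j ⊆ Finset.range n := Finset.filter_subset _ _

lemma mem_Bset {n j k : ℕ} : k ∈ Bset n j ↔ k < n ∧ j.testBit k := by
  rw [Bset, Finset.mem_filter, Finset.mem_range]

lemma testBit_eq_one_iff (j k : ℕ) : j.testBit k = true ↔ j / 2 ^ k % 2 = 1 := by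
  rw [Nat.testBit_eq_decide_div_mod_eq]
  exact decide_eq_true_iff

lemma testBit_zero_iff (j : ℕ) : j.testBit 0 = true ↔ j % 2 = 1 := by
  rw [testBit_eq_one_iff, pow_zero, Nat.div_one]

lemma Bset_inj {n j1 j2 : ℕ} (h1 : j1 < 2 ^ n) (h2 : j2 < 2 ^ n)
    (h : Bset n j1 = Bset n j2) : j1 = j2 := by
  apply Nat.eq_of_testBit_eq
  intro k
  by_cases hk : k < n
  · have := congrArg (fun S => k ∈ S) h
    simp only [eq_iff_iff, mem_Bset] at this
    by_cases hb : j1.testBit k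
    · rw [hb, (this.1 ⟨hk, hb⟩).2]
    · simp only [Bool.not_eq_true] at hb
      rw [hb]
      by_cases hb2 : j2.testBit k
      · exact absurd (this.2 ⟨hk, hb2⟩).2 (by rw [hb]; simp)
      · simp only [Bool.not_eq_true] at hb2
        rw [hb2]
  · push_neg at hk
    have e1 : j1 < 2 ^ k := lt_of_lt_of_le h1 (Nat.pow_le_pow_right (by norm_num) hk)
    have e2 : j2 < 2 ^ k := lt_of_lt_of_le h2 (Nat.pow_le_pow_right (by norm_num) hk)
    rw [Nat.testBit_lt_two_pow e1, Nat.testBit_lt_two_pow e2]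

lemma Bset_and (n j1 j2 : ℕ) : Bset n (j1 &&& j2) = Bset n j1 ∩ Bset n j2 := by
  ext k
  simp only [mem_Bset, Finset.mem_inter, Nat.testBit_and, Bool.and_eq_true]
  tauto

lemma popcount_step (j : ℕ) : popcount j = popcount (j / 2) + j % 2 := by
  rcases Nat.eq_zero_or_pos j with rfl | hj
  · simp [popcount]
  · rcases Nat.even_or_odd j with ⟨m, hm⟩ | ⟨m, hm⟩
    · subst hm
      have hm0 : m ≠ 0 := by omega
      have : m + m = 2 * m := by ring
      rw [this, popcount, Nat.bit0_bits m hm0]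
      simp only [List.count_cons, popcount]
      have : (2 * m) / 2 = m := by omega
      rw [this]
      simp [Nat.mul_mod_right]
    · subst hm
      rw [popcount, Nat.bit1_bits m]
      simp only [List.count_cons, popcount]
      have h1 : (2 * m + 1) / 2 = m := by omega
      have h2 : (2 * m + 1) % 2 = 1 := by omega
      rw [h1, h2]
      simp [popcount]

lemma Bset_zero (j : ℕ) : Bset 0 j = ∅ := by
  rw [Bset, Finset.range_zero, Finset.filter_empty]

lemma Bset_succ_card (n j : ℕ) : (Bset (n+1) j).card = (Bset n (j / 2)).card + j % 2 := by
  have hunion : Bset (n+1) j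
      = (Bset n (j / 2)).image (· + 1) ∪ (if j.testBit 0 then {0} else ∅) := by
    ext k
    simp only [mem_Bset, Finset.mem_union, Finset.mem_image]
    constructor
    · rintro ⟨hk, hb⟩
      cases k with
      | zero =>
        right
        rw [hb]
        simp
      | succ m =>
        left
        refine ⟨m, ?_, rfl⟩
        refine ⟨by omega, ?_⟩
        rw [← Nat.testBit_succ]
        exact hb
    · rintro (⟨m, hm, rfl⟩ | h)
      · exact ⟨by omega, by rw [Nat.testBit_succ]; exact hm.2⟩
      · by_cases hb : j.testBit 0
        · rw [if_pos hb, Finset.mem_singleton] at h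
          subst h
          exact ⟨by omega, hb⟩
        · rw [if_neg hb] at h
          exact absurd h (Finset.notMem_empty k)
  rw [hunion, Finset.card_union_of_disjoint, Finset.card_image_of_injective _
    (add_left_injective 1)]
  · congr 1
    by_cases hb : j.testBit 0
    · rw [if_pos hb, Finset.card_singleton, (testBit_zero_iff j).1 hb]
    · rw [if_neg hb]
      have : j % 2 = 0 := by
        rcases Nat.mod_two_eq_zero_or_one j with h | h
        · exact h
        · exact absurd ((testBit_zero_iff j).2 h) hb
      rw [this, Finset.card_empty]
  · rw [Finset.disjoint_right]
    intro k hk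
    by_cases hb : j.testBit 0
    · rw [if_pos hb, Finset.mem_singleton] at hk
      subst hk
      simp only [Finset.mem_image]
      rintro ⟨m, _, hm⟩
      omega
    · rw [if_neg hb] at hk
      exact absurd hk (Finset.notMem_empty k)

lemma popcount_card : ∀ n j, j < 2 ^ n → popcount j = (Bset n j).card := by
  intro n
  induction n with
  | zero =>
    intro j hj
    interval_cases j
    rw [Bset_zero]
    simp [popcount]
  | succ n IH =>
    intro j hj
    rw [popcount_step, Bset_succ_card, IH (j / 2) (by rw [pow_succ] at hj; omega)]

lemma Bset_surj (n : ℕ) (S : Finset ℕ) (hS : S ⊆ Finset.range n) :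
    ∃ j, j < 2 ^ n ∧ Bset n j = S := by
  induction n generalizing S with
  | zero =>
    refine ⟨0, by norm_num, ?_⟩
    rw [Bset_zero]
    rw [Finset.range_zero, Finset.subset_empty] at hS
    exact hS.symm
  | succ n IH =>
    have hS' : S.erase n ⊆ Finset.range n := by
      intro x hx
      rw [Finset.mem_erase] at hx
      have := hS hx.2
      rw [Finset.mem_range] at this ⊢
      omega
    obtain ⟨j', hj', hBj'⟩ := IH (S.erase n) hS'
    set a : ℕ := if n ∈ S then 1 else 0 with hadef
    refine ⟨2 ^ n * a + j', ?_, ?_⟩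
    · rw [pow_succ]
      have : a ≤ 1 := by rw [hadef]; split <;> norm_num
      nlinarith [pow_pos (show (0:ℕ) < 2 by norm_num) n]
    · ext k
      rw [mem_Bset]
      by_cases hk : k < n
      · have hmod : (2 ^ n * a + j') % 2 ^ n = j' := by
          rw [Nat.mul_add_mod, Nat.mod_eq_of_lt hj']
        have htb : (2 ^ n * a + j').testBit k = j'.testBit k := by
          have h1 := Nat.testBit_mod_two_pow (2 ^ n * a + j') n k
          rw [hmod] at h1
          rw [h1]
          simp [hk]
        rw [htb]
        constructor
        · rintro ⟨_, hb⟩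
          have : k ∈ Bset n j' := mem_Bset.2 ⟨hk, hb⟩
          rw [hBj'] at this
          exact Finset.mem_of_mem_erase this
        · intro hkS
          have : k ∈ S.erase n := Finset.mem_erase.2 ⟨by omega, hkS⟩
          rw [← hBj'] at this
          exact ⟨by omega, (mem_Bset.1 this).2⟩
      · by_cases hkn : k = n
        · subst hkn
          have htb : (2 ^ k * a + j').testBit k = decide (a % 2 = 1) := by
            rw [Nat.testBit_mul_two_pow_add_eq]
            rw [Nat.testBit_lt_two_pow hj']
            simp
          rw [htb]
          constructor
          · rintro ⟨_, hb⟩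
            rw [decide_eq_true_iff] at hb
            rw [hadef] at hb
            by_contra hnS
            rw [if_neg hnS] at hb
            omega
          · intro hnS
            rw [hadef, if_pos hnS]
            exact ⟨by omega, by norm_num⟩
        · constructor
          · rintro ⟨hk1, _⟩
            omega
          · intro hkS
            have := hS hkS
            rw [Finset.mem_range] at this
            omega


lemma polarKernel_apply (a b : Fin 2) :
    polarKernel a b = if (b : ℕ) ≤ (a : ℕ) then 1 else 0 := by
  fin_cases a <;> fin_cases b <;> simp [polarKernel]

lemma polarG_succ_apply (n : ℕ) (t c : Fin (2 ^ (n+1))) :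
    polarG (n+1) t c = polarKernel ⟨(t : ℕ)/2^n, by
        apply Nat.div_lt_of_lt_mul; rw [← pow_succ]; exact t.isLt⟩
      ⟨(c : ℕ)/2^n, by apply Nat.div_lt_of_lt_mul; rw [← pow_succ]; exact c.isLt⟩ *
      polarG n ⟨(t : ℕ) % 2^n, Nat.mod_lt _ (by positivity)⟩
        ⟨(c : ℕ) % 2^n, Nat.mod_lt _ (by positivity)⟩ := by
  show (Matrix.reindex (finCongr (by ring : 2*2^n = 2^(n+1))) (finCongr (by ring))
      (Matrix.reindex finProdFinEquiv finProdFinEquiv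
        (Matrix.kroneckerMap (· * ·) polarKernel (polarG n)))) t c = _
  rw [Matrix.reindex_apply, Matrix.submatrix_apply, Matrix.reindex_apply, Matrix.submatrix_apply,
    finProdFinEquiv_symm_apply, finProdFinEquiv_symm_apply]
  rw [Matrix.kroneckerMap_apply]
  congr 1

lemma div_pow_lt_two {n j : ℕ} (hj : j < 2 ^ (n+1)) : j / 2 ^ n < 2 := by
  apply Nat.div_lt_of_lt_mul
  rw [← pow_succ]
  exact hj

lemma mod_two_eq_one_iff {q : ℕ} (hq : q < 2) : q % 2 = 1 ↔ q = 1 := by omega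

lemma testBit_top {n j : ℕ} (hj : j < 2 ^ (n+1)) : j.testBit n = true ↔ j / 2 ^ n = 1 := by
  rw [testBit_eq_one_iff]
  exact mod_two_eq_one_iff (div_pow_lt_two hj)

lemma testBit_low {n j k : ℕ} (hk : k < n) : (j % 2 ^ n).testBit k = j.testBit k := by
  rw [Nat.testBit_mod_two_pow]
  simp [hk]

lemma Bset_succ_subset_iff {n c t : ℕ} (hc : c < 2 ^ (n+1)) (ht : t < 2 ^ (n+1)) :
    Bset (n+1) c ⊆ Bset (n+1) t
      ↔ (c / 2^n ≤ t / 2^n ∧ Bset n (c % 2^n) ⊆ Bset n (t % 2^n)) := by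
  constructor
  · intro H
    constructor
    · by_cases h1 : c / 2^n = 1
      · have hbc : c.testBit n = true := (testBit_top hc).2 h1
        have hmem : n ∈ Bset (n+1) c := mem_Bset.2 ⟨by omega, hbc⟩
        have hmem2 := mem_Bset.1 (H hmem)
        have ht1 := (testBit_top ht).1 hmem2.2
        rw [h1, ht1]
      · have hle : c / 2 ^ n ≤ 1 := Nat.lt_succ_iff.mp (div_pow_lt_two hc)
        have h0 : c / 2 ^ n = 0 := by
          rcases Nat.eq_zero_or_pos (c / 2 ^ n) with h | h
          · exact h
          · exact absurd (le_antisymm hle h) h1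
        rw [h0]
        exact Nat.zero_le _
    · intro k hk
      rw [mem_Bset] at hk
      obtain ⟨hkn, hb⟩ := hk
      rw [testBit_low hkn] at hb
      have : k ∈ Bset (n+1) c := mem_Bset.2 ⟨by omega, hb⟩
      have := mem_Bset.1 (H this)
      exact mem_Bset.2 ⟨hkn, by rw [testBit_low hkn]; exact this.2⟩
  · rintro ⟨h1, h2⟩ k hk
    rw [mem_Bset] at hk
    obtain ⟨hkn1, hb⟩ := hk
    by_cases hkn : k < n
    · have : k ∈ Bset n (c % 2^n) := mem_Bset.2 ⟨hkn, by rw [testBit_low hkn]; exact hb⟩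
      have := mem_Bset.1 (h2 this)
      rw [testBit_low hkn] at this
      exact mem_Bset.2 ⟨by omega, this.2⟩
    · have hkeq : k = n := by omega
      subst hkeq
      have hc1 : c / 2^k = 1 := (testBit_top hc).1 hb
      have ht1 : t / 2^k = 1 :=
        le_antisymm (Nat.lt_succ_iff.mp (div_pow_lt_two ht)) (hc1 ▸ h1)
      exact mem_Bset.2 ⟨by omega, (testBit_top ht).2 ht1⟩

lemma polarG_apply : ∀ (n : ℕ) (t c : Fin (2 ^ n)),
    polarG n t c = if Bset n (c : ℕ) ⊆ Bset n (t : ℕ) then 1 else 0 := by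
  intro n
  induction n with
  | zero =>
    intro t c
    have ht : t = c := Fin.ext (by
      have h1 : (t : ℕ) < 1 := by simpa using t.isLt
      have h2 : (c : ℕ) < 1 := by simpa using c.isLt
      omega)
    subst ht
    rw [if_pos (Finset.Subset.refl _)]
    show (1 : Matrix (Fin (2^0)) (Fin (2^0)) (ZMod 2)) t t = 1
    rw [Matrix.one_apply_eq]
  | succ n IH =>
    intro t c
    rw [polarG_succ_apply, polarKernel_apply, IH]
    simp only []
    rw [show (if Bset (n+1) (c:ℕ) ⊆ Bset (n+1) (t:ℕ) then (1 : ZMod 2) else 0)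
        = if ((c:ℕ)/2^n ≤ (t:ℕ)/2^n ∧ Bset n ((c:ℕ) % 2^n) ⊆ Bset n ((t:ℕ) % 2^n))
          then 1 else 0 from if_congr (Bset_succ_subset_iff c.isLt t.isLt) rfl rfl]
    by_cases h1 : (c : ℕ) / 2^n ≤ (t : ℕ) / 2^n <;>
      by_cases h2 : Bset n ((c:ℕ) % 2^n) ⊆ Bset n ((t:ℕ) % 2^n) <;>
      simp [h1, h2]

lemma vec_apply (n : ℕ) (Φ : Finset (Fin (2 ^ n))) (c : Fin (2 ^ n)) :
    (∑ t ∈ Φ, row n t) c = f (Φ.image fun t : Fin (2^n) => Bset n (t : ℕ)) (Bset n (c : ℕ)) := by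
  rw [Finset.sum_apply]
  unfold f
  rw [Finset.filter_image]
  have hinj : Set.InjOn (fun t : Fin (2^n) => Bset n (t : ℕ))
      ↑(Φ.filter fun a => Bset n (c : ℕ) ⊆ Bset n ((a : Fin (2^n)) : ℕ)) := by
    intro a _ b _ hab
    exact Fin.ext (Bset_inj a.isLt b.isLt hab)
  rw [Finset.card_image_of_injOn hinj]
  rw [card_filter_cast]
  apply Finset.sum_congr rfl
  intro t _
  rw [row, polarG_apply]

lemma weight_eq (n : ℕ) (Φ : Finset (Fin (2 ^ n))) :
    hammingWeight (∑ t ∈ Φ, row n t)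
      = Wt (Finset.range n) (Φ.image fun t : Fin (2^n) => Bset n (t : ℕ)) := by
  unfold hammingWeight Wt
  apply Finset.card_nbij (i := fun c : Fin (2^n) => Bset n (c : ℕ))
  · intro c hc
    rw [Finset.mem_coe, Finset.mem_filter] at hc
    refine Finset.mem_filter.2 ⟨Finset.mem_powerset.2 (Bset_subset_range n _), ?_⟩
    rw [← vec_apply]
    exact hc.2
  · intro c1 _ c2 _ h
    exact Fin.ext (Bset_inj c1.isLt c2.isLt h)
  · intro S hS
    simp only [Finset.coe_filter, Set.mem_setOf_eq, Finset.mem_powerset] at hS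
    obtain ⟨j, hj, hBj⟩ := Bset_surj n S hS.1
    refine ⟨⟨j, hj⟩, ?_, hBj⟩
    simp only [Finset.coe_filter, Set.mem_setOf_eq, Finset.mem_filter]
    refine ⟨Finset.mem_univ _, ?_⟩
    rw [vec_apply]
    show f _ (Bset n j) ≠ 0
    rw [hBj]
    exact hS.2

lemma Wt_pair (u I J : Finset ℕ) (hIu : I ⊆ u) (hJu : J ⊆ u) (hIJ : I ≠ J) :
    Wt u {I, J} = 2 ^ I.card + 2 ^ J.card - 2 ^ (I ∩ J).card - 2 ^ (I ∩ J).card := by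
  have hfval : ∀ c, f {I, J} c = (if c ⊆ I then (1 : ZMod 2) else 0)
      + (if c ⊆ J then 1 else 0) := by
    intro c
    rw [f_eq_sum, Finset.sum_pair hIJ]
  have hone : (1 : ZMod 2) ≠ 0 := by decide
  have hset : (u.powerset).filter (fun c => f {I, J} c ≠ 0)
      = (I.powerset ∪ J.powerset) \ (I ∩ J).powerset := by
    ext c
    simp only [Finset.mem_filter, Finset.mem_powerset, Finset.mem_sdiff, Finset.mem_union,
      Finset.mem_powerset, Finset.subset_inter_iff]
    rw [hfval c]
    constructor
    · rintro ⟨hcu, hne⟩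
      by_cases h1 : c ⊆ I <;> by_cases h2 : c ⊆ J
      · rw [if_pos h1, if_pos h2] at hne
        exact absurd (by decide : (1 : ZMod 2) + 1 = 0) hne
      · exact ⟨Or.inl h1, fun h => h2 h.2⟩
      · exact ⟨Or.inr h2, fun h => h1 h.1⟩
      · rw [if_neg h1, if_neg h2] at hne
        exact absurd (by decide : (0 : ZMod 2) + 0 = 0) hne
    · rintro ⟨hor, hnand⟩
      rcases hor with h1 | h1
      · have h2 : ¬ c ⊆ J := fun h => hnand ⟨h1, h⟩
        rw [if_pos h1, if_neg h2]
        exact ⟨h1.trans hIu, by rw [add_zero]; exact hone⟩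
      · have h2 : ¬ c ⊆ I := fun h => hnand ⟨h, h1⟩
        rw [if_neg h2, if_pos h1]
        exact ⟨h1.trans hJu, by rw [zero_add]; exact hone⟩
  unfold Wt
  rw [hset]
  have hCsub : (I ∩ J).powerset ⊆ I.powerset ∪ J.powerset := by
    intro c hc
    rw [Finset.mem_powerset] at hc
    exact Finset.mem_union_left _ (Finset.mem_powerset.2 (hc.trans Finset.inter_subset_left))
  rw [Finset.card_sdiff_of_subset hCsub]
  have hinter : I.powerset ∩ J.powerset = (I ∩ J).powerset := by
    ext c
    simp only [Finset.mem_inter, Finset.mem_powerset, Finset.subset_inter_iff]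
  have hui := Finset.card_union_add_card_inter I.powerset J.powerset
  rw [hinter, Finset.card_powerset, Finset.card_powerset, Finset.card_powerset] at hui
  have h1 : 2 ^ (I ∩ J).card ≤ 2 ^ I.card :=
    Nat.pow_le_pow_right (by norm_num) (Finset.card_le_card Finset.inter_subset_left)
  have h2 : 2 ^ (I ∩ J).card ≤ 2 ^ J.card :=
    Nat.pow_le_pow_right (by norm_num) (Finset.card_le_card Finset.inter_subset_right)
  have hu2 : (I.powerset ∪ J.powerset).card
      = 2 ^ I.card + 2 ^ J.card - 2 ^ (I ∩ J).card := by omega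
  rw [hu2, Finset.card_powerset]

end Transfer

end PolarAux


open PolarAux in
theorem merged_pair_weight_lower_bound (n ℓ : ℕ) (hℓ : 2 ≤ ℓ)
    (i j : Fin (2 ^ n)) (hij : i ≠ j)
    (hi : popcount (i : ℕ) = ℓ) (hj : popcount (j : ℕ) = ℓ)
    (T : Finset (Fin (2 ^ n))) (hT : ∀ t ∈ T, ℓ + 1 ≤ popcount (t : ℕ)) :
    hammingWeight (row n i + row n j) ≤
        hammingWeight (row n i + row n j + ∑ t ∈ T, row n t) ∧
      hammingWeight (row n i + row n j) =
        2 ^ (ℓ + 1) - 2 ^ (popcount ((i : ℕ) &&& (j : ℕ)) + 1) := by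
  classical
  have hiT : i ∉ T := fun h => by have := hT i h; omega
  have hjT : j ∉ T := fun h => by have := hT j h; omega
  set Bf : Fin (2^n) → Finset ℕ := fun t : Fin (2^n) => Bset n (t : ℕ) with hBfdef
  set Ii : Finset ℕ := Bf i with hIidef
  set Jj : Finset ℕ := Bf j with hJjdef
  have hIcard : Ii.card = ℓ := by rw [hIidef, hBfdef, ← popcount_card n _ i.isLt]; exact hi
  have hJcard : Jj.card = ℓ := by rw [hJjdef, hBfdef, ← popcount_card n _ j.isLt]; exact hj
  have hIJ : Ii ≠ Jj := fun h => hij (Fin.ext (Bset_inj i.isLt j.isLt h))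
  have handlt : (i : ℕ) &&& (j : ℕ) < 2 ^ n := lt_of_le_of_lt Nat.and_le_right j.isLt
  have hinter : (Ii ∩ Jj).card = popcount ((i : ℕ) &&& (j : ℕ)) := by
    rw [hIidef, hJjdef, hBfdef]
    rw [← Bset_and, ← popcount_card n _ handlt]
  have hpair : row n i + row n j = ∑ t ∈ ({i, j} : Finset (Fin (2^n))), row n t := by
    rw [Finset.sum_pair hij]
  have hjmem : j ∉ ({i} : Finset (Fin (2^n)))ᶜ → True := fun _ => trivial
  have hbig : row n i + row n j + ∑ t ∈ T, row n t
      = ∑ t ∈ insert i (insert j T), row n t := by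
    rw [Finset.sum_insert (fun h => by
      rcases Finset.mem_insert.1 h with h | h
      · exact hij h
      · exact hiT h), Finset.sum_insert hjT, add_assoc]
  have w1 : hammingWeight (row n i + row n j) = Wt (Finset.range n) {Ii, Jj} := by
    rw [hpair, weight_eq]
    congr 1
    rw [Finset.image_insert, Finset.image_singleton]
  have w2 : hammingWeight (row n i + row n j + ∑ t ∈ T, row n t)
      = Wt (Finset.range n) (insert Ii (insert Jj (T.image Bf))) := by
    rw [hbig, weight_eq]
    congr 1
    rw [Finset.image_insert, Finset.image_insert]
  have hIsub : Ii ⊆ Finset.range n := Bset_subset_range n _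
  have hJsub : Jj ⊆ Finset.range n := Bset_subset_range n _
  have hccard : (Ii ∩ Jj).card ≤ ℓ := by
    rw [← hIcard]
    exact Finset.card_le_card Finset.inter_subset_left
  have hcpow : 2 ^ (Ii ∩ Jj).card ≤ 2 ^ ℓ := Nat.pow_le_pow_right (by norm_num) hccard
  have heq : hammingWeight (row n i + row n j)
      = 2 ^ (ℓ + 1) - 2 ^ (popcount ((i : ℕ) &&& (j : ℕ)) + 1) := by
    rw [w1, Wt_pair _ _ _ hIsub hJsub hIJ, hIcard, hJcard, ← hinter]
    have e1 : 2 ^ (ℓ + 1) = 2 * 2 ^ ℓ := by ring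
    have e2 : 2 ^ ((Ii ∩ Jj).card + 1) = 2 * 2 ^ (Ii ∩ Jj).card := by ring
    omega
  refine ⟨?_, heq⟩
  rw [heq, w2]
  have hmain := abstract_main (Finset.range n) Ii Jj (insert Ii (insert Jj (T.image Bf)))
    hIsub hJsub hIJ (by rw [hIcard, hJcard])
    (Finset.mem_insert_self _ _)
    (Finset.mem_insert_of_mem (Finset.mem_insert_self _ _))
    (by
      intro t ht
      rcases Finset.mem_insert.1 ht with rfl | ht
      · exact ⟨hIsub, Or.inl rfl⟩
      rcases Finset.mem_insert.1 ht with rfl | ht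
      · exact ⟨hJsub, Or.inr (Or.inl rfl)⟩
      · obtain ⟨t0, ht0, rfl⟩ := Finset.mem_image.1 ht
        refine ⟨Bset_subset_range n _, Or.inr (Or.inr ?_)⟩
        rw [hBfdef, ← popcount_card n _ t0.isLt, hIcard]
        exact hT t0 ht0)
  rw [hIcard, hinter] at hmain
  exact hmain
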